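/- Let p_1, p_2, … be independent, identically distributed random variables with values in [0,1] whose common density f satisfies f(1−x) = 1 + O(x^{δ}) as x → 0⁺ for some δ > 0 (the case β = 0). Set S_n = ∑_{i=1}^n 1/(1 − p_i). Then for every ε > 0, lim_{n→∞} P(|S_n/(n log n) − 1| > ε) = 0. -/

import Mathlib

open MeasureTheory ProbabilityTheory Set intervalIntegral
open scoped ENNReal NNReal

lemma aux_comp_sub (g : ℝ → ℝ) {l u : ℝ} (h : l ≤ u) :
    ∫ x in Set.Ioc (1-u) (1-l), g (1-x) = ∫ t in l..u, g t := by
  rw [← intervalIntegral.integral_of_le (by linarith : (1:ℝ)-u ≤ 1-l),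
      intervalIntegral.integral_comp_sub_left (fun t => g t) 1]
  simp [sub_sub_cancel]

lemma aux_int_one_add_mul_inv {C δ l u : ℝ} (hl : 0 < l) (hlu : l ≤ u) (hδ : 0 < δ) :
    ∫ t in l..u, (1 + C * t ^ δ) * t⁻¹ =
      (Real.log u - Real.log l) + C * ((u ^ δ - l ^ δ)/δ) := by
  have hu : 0 < u := lt_of_lt_of_le hl hlu
  have huIcc : Set.uIcc l u = Set.Icc l u := Set.uIcc_of_le hlu
  have hmem : ∀ t ∈ Set.uIcc l u, (0:ℝ) < t := by
    intro t ht; rw [huIcc] at ht; exact lt_of_lt_of_le hl ht.1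
  have hne : (0:ℝ) ∉ Set.uIcc l u := fun h0 => lt_irrefl 0 (hmem 0 h0)
  have h1 : ∫ t in l..u, (1 + C * t ^ δ) * t⁻¹ = ∫ t in l..u, (t⁻¹ + C * t ^ (δ - 1)) := by
    apply intervalIntegral.integral_congr
    intro t ht
    have ht0 : (0:ℝ) < t := hmem t ht
    show (1 + C * t ^ δ) * t⁻¹ = t⁻¹ + C * t ^ (δ - 1)
    rw [show t ^ (δ - 1) = t ^ δ / t by rw [Real.rpow_sub ht0, Real.rpow_one]]
    field_simp
  rw [h1, intervalIntegral.integral_add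
        (intervalIntegral.intervalIntegrable_inv (fun x hx => (hmem x hx).ne') continuousOn_id)
        ((intervalIntegral.intervalIntegrable_rpow (Or.inr hne)).const_mul C),
      integral_inv hne, intervalIntegral.integral_const_mul,
      integral_rpow (Or.inl (by linarith))]
  rw [sub_add_cancel, Real.log_div hu.ne' hl.ne']

lemma aux_int_inv_sq {l u : ℝ} (hl : 0 < l) (hlu : l ≤ u) :
    ∫ t in l..u, (t⁻¹)^2 = l⁻¹ - u⁻¹ := by
  have hu : 0 < u := lt_of_lt_of_le hl hlu
  have huIcc : Set.uIcc l u = Set.Icc l u := Set.uIcc_of_le hlu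
  have hmem : ∀ t ∈ Set.uIcc l u, (0:ℝ) < t := by
    intro t ht; rw [huIcc] at ht; exact lt_of_lt_of_le hl ht.1
  have hne : (0:ℝ) ∉ Set.uIcc l u := fun h0 => lt_irrefl 0 (hmem 0 h0)
  have h1 : ∫ t in l..u, (t⁻¹)^2 = ∫ t in l..u, t ^ ((-2:ℤ)) := by
    apply intervalIntegral.integral_congr
    intro t ht
    show (t⁻¹)^2 = t ^ ((-2:ℤ))
    rw [zpow_neg, inv_pow]
    norm_cast
  rw [h1, integral_zpow (Or.inr ⟨by norm_num, hne⟩)]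
  norm_num
  ring

noncomputable def auxPsi (c x : ℝ) : ℝ := min c |(1 - x)⁻¹|

lemma auxPsi_meas (c : ℝ) : Measurable (auxPsi c) :=
  measurable_const.min ((measurable_const.sub measurable_id).inv.abs)

lemma auxPsi_nonneg {c : ℝ} (hc : 0 ≤ c) (x : ℝ) : 0 ≤ auxPsi c x :=
  le_min hc (abs_nonneg _)

lemma auxPsi_le (c x : ℝ) : auxPsi c x ≤ c := min_le_left _ _

lemma auxPsi_eq {c x : ℝ} (hc : 0 < c) (hx : x ≤ 1 - 1/c) : auxPsi c x = (1-x)⁻¹ := by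
  have h1 : (0:ℝ) < 1/c := by positivity
  have h2 : 1/c ≤ 1 - x := by linarith
  have h3 : (0:ℝ) < 1 - x := lt_of_lt_of_le h1 h2
  have h4 : (1-x)⁻¹ ≤ c := by
    have := inv_anti₀ h1 h2
    rwa [one_div, inv_inv] at this
  have h5 : |(1-x)⁻¹| = (1-x)⁻¹ := abs_of_nonneg (inv_nonneg.mpr h3.le)
  rw [auxPsi, h5, min_eq_right h4]

lemma aux_ofReal_max (f : ℝ → ℝ) (x : ℝ) :
    ENNReal.ofReal (max (f x) 0) = ENNReal.ofReal (f x) := by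
  rcases le_total (f x) 0 with h | h
  · rw [max_eq_right h, ENNReal.ofReal_zero, eq_comm, ENNReal.ofReal_eq_zero]; exact h
  · rw [max_eq_left h]

lemma aux_lintegral_total {f : ℝ → ℝ}
    (hprob : IsProbabilityMeasure (volume.withDensity fun x => ENNReal.ofReal (f x))) :
    ∫⁻ x, ENNReal.ofReal (f x) = 1 := by
  have h := measure_univ (μ := volume.withDensity fun x => ENNReal.ofReal (f x))
  rwa [withDensity_apply _ MeasurableSet.univ, Measure.restrict_univ] at h

lemma aux_F_integrable {f : ℝ → ℝ} (hf : Measurable f)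
    (hprob : IsProbabilityMeasure (volume.withDensity fun x => ENNReal.ofReal (f x))) :
    Integrable (fun x => max (f x) 0) volume := by
  have h := integrable_toReal_of_lintegral_ne_top (μ := volume)
      (f := fun x => ENNReal.ofReal (f x)) hf.ennreal_ofReal.aemeasurable
      (by rw [aux_lintegral_total hprob]; exact ENNReal.one_ne_top)
  have heq : (fun x => max (f x) 0) = fun x => (ENNReal.ofReal (f x)).toReal := by
    funext x
    rcases le_total (f x) 0 with h' | h'
    · rw [max_eq_right h', ENNReal.ofReal_eq_zero.mpr h', ENNReal.toReal_zero]
    · rw [max_eq_left h', ENNReal.toReal_ofReal h']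
  rw [heq]; exact h

lemma aux_F_integral_one {f : ℝ → ℝ} (hf : Measurable f)
    (hprob : IsProbabilityMeasure (volume.withDensity fun x => ENNReal.ofReal (f x))) :
    ∫ x, max (f x) 0 = 1 := by
  rw [integral_eq_lintegral_of_nonneg_ae (f := fun x => max (f x) 0)
      (ae_of_all _ fun x => le_max_right _ _)
      (hf.max measurable_const).aestronglyMeasurable]
  have : (fun x => ENNReal.ofReal (max (f x) 0)) = fun x => ENNReal.ofReal (f x) := by
    funext x; exact aux_ofReal_max f x
  rw [this, aux_lintegral_total hprob, ENNReal.toReal_one]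

lemma aux_integral_withDensity {f : ℝ → ℝ} (hf : Measurable f) (g : ℝ → ℝ) :
    ∫ x, g x ∂(volume.withDensity fun x => ENNReal.ofReal (f x))
      = ∫ x, g x * max (f x) 0 := by
  have h1 : (fun x => ENNReal.ofReal (f x)) = fun x => ((f x).toNNReal : ℝ≥0∞) := rfl
  rw [h1, integral_withDensity_eq_integral_smul hf.real_toNNReal]
  congr 1; funext x
  simp [NNReal.smul_def, Real.coe_toNNReal', mul_comm]

lemma aux_null_max {f : ℝ → ℝ} (hf : Measurable f)
    (hnull : (volume.withDensity fun x => ENNReal.ofReal (f x)) (Set.Icc (0:ℝ) 1)ᶜ = 0) :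
    ∀ᵐ x ∂(volume : Measure ℝ), x ∉ Set.Icc (0:ℝ) 1 → max (f x) 0 = 0 := by
  rw [withDensity_apply _ measurableSet_Icc.compl] at hnull
  have h := (setLIntegral_eq_zero_iff measurableSet_Icc.compl hf.ennreal_ofReal).mp hnull
  filter_upwards [h] with x hx hmem
  have h2 := hx hmem
  simp only [Pi.zero_apply, ENNReal.ofReal_eq_zero] at h2
  exact max_eq_right h2

lemma aux_split {G : ℝ → ℝ} (hG : Integrable G volume)
    (hGnull : ∀ᵐ x ∂(volume : Measure ℝ), x ∉ Set.Icc (0:ℝ) 1 → G x = 0)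
    {a c : ℝ} (ha : 0 < a) (ha1 : a ≤ 1) (hc1 : 1 ≤ c) (hca : 1/c ≤ a) :
    ∫ x, G x = (∫ x in Set.Icc 0 (1-a), G x) + (∫ x in Set.Ioc (1-a) (1-1/c), G x)
      + (∫ x in Set.Ioc (1-1/c) 1, G x) := by
  have h0c : (0:ℝ) < 1/c := by positivity
  have key : Set.Icc (0:ℝ) 1 =
      (Set.Icc 0 (1-a) ∪ Set.Ioc (1-a) (1-1/c)) ∪ Set.Ioc (1-1/c) 1 := by
    rw [Set.Icc_union_Ioc_eq_Icc (by linarith) (by linarith),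
        Set.Icc_union_Ioc_eq_Icc (by linarith) (by linarith)]
  have hd1 : Disjoint (Set.Icc (0:ℝ) (1-a)) (Set.Ioc (1-a) (1-1/c)) :=
    (Set.Iic_disjoint_Ioi le_rfl).mono Set.Icc_subset_Iic_self Set.Ioc_subset_Ioi_self
  have hd2 : Disjoint (Set.Icc (0:ℝ) (1-a) ∪ Set.Ioc (1-a) (1-1/c))
      (Set.Ioc (1-1/c) 1) := by
    refine (Set.Iic_disjoint_Ioi le_rfl).mono ?_ Set.Ioc_subset_Ioi_self
    rintro x (hx | hx)
    · exact Set.mem_Iic.mpr (by linarith [hx.2] : x ≤ 1 - 1/c)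
    · exact Set.mem_Iic.mpr hx.2
  rw [← setIntegral_eq_integral_of_ae_compl_eq_zero hGnull, key,
      setIntegral_union hd2 measurableSet_Ioc hG.integrableOn hG.integrableOn,
      setIntegral_union hd1 measurableSet_Ioc hG.integrableOn hG.integrableOn]

lemma aux_tail {f : ℝ → ℝ} {a C δ c : ℝ} (ha : 0 < a) (ha1 : a ≤ 1)
    (hC : 0 ≤ C) (hδ : 0 < δ)
    (hfb : ∀ u : ℝ, 0 < u → u ≤ a → |f (1 - u) - 1| ≤ C * u ^ δ)
    (hc1 : 1 ≤ c) (hca : 1/c ≤ a) :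
    (volume.withDensity fun x => ENNReal.ofReal (f x)) (Set.Ioo (1-1/c) 1)
      ≤ ENNReal.ofReal ((1+C)/c) := by
  have hc0 : (0:ℝ) < c := lt_of_lt_of_le one_pos hc1
  have h0c : (0:ℝ) < 1/c := by positivity
  rw [withDensity_apply _ measurableSet_Ioo]
  have hbd : ∀ x ∈ Set.Ioo (1-1/c) 1, ENNReal.ofReal (f x) ≤ ENNReal.ofReal (1+C) := by
    intro x hx
    have hu0 : 0 < 1 - x := by linarith [hx.2]
    have hua : 1 - x ≤ a := by linarith [hx.1]
    have h1 := hfb (1-x) hu0 hua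
    rw [show (1:ℝ) - (1-x) = x by ring] at h1
    have h2 : (1-x) ^ δ ≤ 1 := Real.rpow_le_one hu0.le (by linarith) hδ.le
    have h3 : f x ≤ 1 + C := by nlinarith [abs_le.mp h1, mul_le_mul_of_nonneg_left h2 hC]
    exact ENNReal.ofReal_le_ofReal h3
  calc ∫⁻ x in Set.Ioo (1-1/c) 1, ENNReal.ofReal (f x)
      ≤ ∫⁻ _ in Set.Ioo (1-1/c) 1, ENNReal.ofReal (1+C) :=
        setLIntegral_mono' measurableSet_Ioo hbd
    _ = ENNReal.ofReal (1+C) * volume (Set.Ioo (1-1/c) 1) := setLIntegral_const _ _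
    _ = ENNReal.ofReal ((1+C)/c) := by
        rw [Real.volume_Ioo, show (1:ℝ) - (1-1/c) = 1/c by ring,
          ← ENNReal.ofReal_mul (by linarith)]
        congr 1
        field_simp

lemma aux_fbounds {f : ℝ → ℝ} {a C δ : ℝ} (hC : 0 ≤ C) (hδ : 0 < δ) (ha1 : a ≤ 1)
    (hfb : ∀ u : ℝ, 0 < u → u ≤ a → |f (1 - u) - 1| ≤ C * u ^ δ)
    {x : ℝ} (h0 : 0 < 1 - x) (hxa : 1 - x ≤ a) :
    (1 - C*(1-x)^δ ≤ f x) ∧ (max (f x) 0 ≤ 1 + C*(1-x)^δ) ∧ ((1-x)^δ ≤ 1) := by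
  have h := hfb (1-x) h0 hxa
  rw [show (1:ℝ)-(1-x) = x by ring] at h
  have habs := abs_le.mp h
  have hpow1 : (1-x)^δ ≤ 1 := Real.rpow_le_one h0.le (by linarith) hδ.le
  have hpow0 : 0 ≤ (1-x)^δ := Real.rpow_nonneg h0.le δ
  have hC0 : 0 ≤ C*(1-x)^δ := mul_nonneg hC hpow0
  exact ⟨by linarith [habs.1], max_le (by linarith [habs.2]) (by linarith), hpow1⟩

lemma aux_mean {f : ℝ → ℝ} (hf : Measurable f) {a C δ c : ℝ} (ha : 0 < a) (ha1 : a ≤ 1)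
    (hC : 0 ≤ C) (hδ : 0 < δ)
    (hfb : ∀ u : ℝ, 0 < u → u ≤ a → |f (1 - u) - 1| ≤ C * u ^ δ)
    (hprob : IsProbabilityMeasure (volume.withDensity fun x => ENNReal.ofReal (f x)))
    (hnull : (volume.withDensity fun x => ENNReal.ofReal (f x)) (Set.Icc (0:ℝ) 1)ᶜ = 0)
    (hc1 : 1 ≤ c) (hca : 1/c ≤ a) :
    |(∫ x, auxPsi c x ∂(volume.withDensity fun x => ENNReal.ofReal (f x))) - Real.log c|
      ≤ a⁻¹ + |Real.log a| + C/δ + (1+C) := by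
  have hc0 : (0:ℝ) < c := lt_of_lt_of_le one_pos hc1
  have h0c : (0:ℝ) < 1/c := by positivity
  have hFint := aux_F_integrable hf hprob
  have hF1 := aux_F_integral_one hf hprob
  have hpsim := auxPsi_meas c
  have hG : Integrable (fun x => auxPsi c x * max (f x) 0) volume := by
    refine hFint.bdd_mul hpsim.aestronglyMeasurable (c := c) (ae_of_all _ fun x => ?_)
    rw [Real.norm_eq_abs, abs_of_nonneg (auxPsi_nonneg hc0.le x)]; exact auxPsi_le c x
  have hGnull : ∀ᵐ x ∂(volume : Measure ℝ), x ∉ Set.Icc (0:ℝ) 1 →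
      auxPsi c x * max (f x) 0 = 0 := by
    filter_upwards [aux_null_max hf hnull] with x hx hmem
    rw [hx hmem, mul_zero]
  rw [aux_integral_withDensity hf (auxPsi c),
      aux_split hG hGnull ha ha1 hc1 hca]
  -- piece 1
  have h1l : 0 ≤ ∫ x in Set.Icc (0:ℝ) (1-a), auxPsi c x * max (f x) 0 :=
    setIntegral_nonneg measurableSet_Icc fun x _ =>
      mul_nonneg (auxPsi_nonneg hc0.le x) (le_max_right _ _)
  have h1u : (∫ x in Set.Icc (0:ℝ) (1-a), auxPsi c x * max (f x) 0) ≤ a⁻¹ := by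
    have step1 : (∫ x in Set.Icc (0:ℝ) (1-a), auxPsi c x * max (f x) 0)
        ≤ ∫ x in Set.Icc (0:ℝ) (1-a), a⁻¹ * max (f x) 0 := by
      refine setIntegral_mono_on hG.integrableOn (hFint.const_mul a⁻¹).integrableOn
        measurableSet_Icc fun x hx => ?_
      have hax : a ≤ 1 - x := by linarith [hx.2]
      have h1x : (0:ℝ) < 1 - x := lt_of_lt_of_le ha hax
      have hψ : auxPsi c x ≤ a⁻¹ := by
        refine le_trans (min_le_right _ _) ?_
        rw [abs_of_nonneg (inv_nonneg.mpr h1x.le)]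
        exact inv_anti₀ ha hax
      exact mul_le_mul_of_nonneg_right hψ (le_max_right _ _)
    have step2 : (∫ x in Set.Icc (0:ℝ) (1-a), a⁻¹ * max (f x) 0)
        = a⁻¹ * ∫ x in Set.Icc (0:ℝ) (1-a), max (f x) 0 := MeasureTheory.integral_const_mul _ _
    have step3 : (∫ x in Set.Icc (0:ℝ) (1-a), max (f x) 0) ≤ 1 := by
      rw [← hF1]
      exact setIntegral_le_integral hFint (ae_of_all _ fun x => le_max_right _ _)
    have step4 : (0:ℝ) ≤ a⁻¹ := inv_nonneg.mpr ha.le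
    calc (∫ x in Set.Icc (0:ℝ) (1-a), auxPsi c x * max (f x) 0)
        ≤ a⁻¹ * ∫ x in Set.Icc (0:ℝ) (1-a), max (f x) 0 := by rw [← step2]; exact step1
      _ ≤ a⁻¹ * 1 := mul_le_mul_of_nonneg_left step3 step4
      _ = a⁻¹ := mul_one _
  -- piece 3
  have h3l : 0 ≤ ∫ x in Set.Ioc (1-1/c) 1, auxPsi c x * max (f x) 0 :=
    setIntegral_nonneg measurableSet_Ioc fun x _ =>
      mul_nonneg (auxPsi_nonneg hc0.le x) (le_max_right _ _)
  have h3u : (∫ x in Set.Ioc (1-1/c) 1, auxPsi c x * max (f x) 0) ≤ 1 + C := by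
    rw [integral_Ioc_eq_integral_Ioo]
    have hvol : volume (Set.Ioo ((1:ℝ)-1/c) 1) = ENNReal.ofReal (1/c) := by
      rw [Real.volume_Ioo, show (1:ℝ) - (1-1/c) = 1/c by ring]
    have step1 : (∫ x in Set.Ioo ((1:ℝ)-1/c) 1, auxPsi c x * max (f x) 0)
        ≤ ∫ _ in Set.Ioo ((1:ℝ)-1/c) 1, c * (1+C) := by
      refine setIntegral_mono_on hG.integrableOn
        (integrableOn_const (by rw [hvol]; exact ENNReal.ofReal_ne_top))
        measurableSet_Ioo fun x hx => ?_
      have h0x : (0:ℝ) < 1 - x := by linarith [hx.2]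
      have hxa : 1 - x ≤ a := by linarith [hx.1]
      obtain ⟨-, hup, hp1⟩ := aux_fbounds hC hδ ha1 hfb h0x hxa
      have hFle : max (f x) 0 ≤ 1 + C := by nlinarith
      exact mul_le_mul (auxPsi_le c x) hFle (le_max_right _ _) hc0.le
    rw [setIntegral_const, measureReal_def, hvol, ENNReal.toReal_ofReal h0c.le, smul_eq_mul] at step1
    calc (∫ x in Set.Ioo ((1:ℝ)-1/c) 1, auxPsi c x * max (f x) 0)
        ≤ 1/c * (c * (1+C)) := step1
      _ = 1 + C := by field_simp
  -- piece 2
  have hmid : ∀ x ∈ Set.Ioc (1-a) (1-1/c), (0:ℝ) < 1 - x ∧ 1 - x ≤ a := by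
    intro x hx
    exact ⟨by linarith [hx.2], by linarith [hx.1]⟩
  have hcontU : ContinuousOn (fun x : ℝ => (fun z : ℝ => (1 + C*z^δ) * z⁻¹) (1-x))
      (Set.Icc (1-a) (1-1/c)) := by
    have hc1x : ContinuousOn (fun x : ℝ => 1 - x) (Set.Icc (1-a) (1-1/c)) :=
      continuousOn_const.sub continuousOn_id
    have hne : ∀ x ∈ Set.Icc ((1:ℝ)-a) (1-1/c), (1:ℝ) - x ≠ 0 := fun x hx =>
      (by linarith [hx.2] : (0:ℝ) < 1 - x).ne'
    exact ((continuousOn_const.add (continuousOn_const.mul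
      (hc1x.rpow_const fun x _ => Or.inr hδ.le))).mul (hc1x.inv₀ hne))
  have hcontL : ContinuousOn (fun x : ℝ => (fun z : ℝ => (1 + (-C)*z^δ) * z⁻¹) (1-x))
      (Set.Icc (1-a) (1-1/c)) := by
    have hc1x : ContinuousOn (fun x : ℝ => 1 - x) (Set.Icc (1-a) (1-1/c)) :=
      continuousOn_const.sub continuousOn_id
    have hne : ∀ x ∈ Set.Icc ((1:ℝ)-a) (1-1/c), (1:ℝ) - x ≠ 0 := fun x hx =>
      (by linarith [hx.2] : (0:ℝ) < 1 - x).ne'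
    exact ((continuousOn_const.add (continuousOn_const.mul
      (hc1x.rpow_const fun x _ => Or.inr hδ.le))).mul (hc1x.inv₀ hne))
  have hIU : IntegrableOn (fun x : ℝ => (fun z : ℝ => (1 + C*z^δ) * z⁻¹) (1-x))
      (Set.Ioc (1-a) (1-1/c)) volume :=
    (hcontU.integrableOn_Icc).mono_set Set.Ioc_subset_Icc_self
  have hIL : IntegrableOn (fun x : ℝ => (fun z : ℝ => (1 + (-C)*z^δ) * z⁻¹) (1-x))
      (Set.Ioc (1-a) (1-1/c)) volume :=
    (hcontL.integrableOn_Icc).mono_set Set.Ioc_subset_Icc_self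
  have hvalU : (∫ x in Set.Ioc (1-a) (1-1/c), (fun z : ℝ => (1 + C*z^δ) * z⁻¹) (1-x))
      = (Real.log a - Real.log (1/c)) + C * ((a^δ - (1/c)^δ)/δ) := by
    rw [aux_comp_sub (fun z : ℝ => (1 + C*z^δ) * z⁻¹) hca]
    exact aux_int_one_add_mul_inv h0c hca hδ
  have hvalL : (∫ x in Set.Ioc (1-a) (1-1/c), (fun z : ℝ => (1 + (-C)*z^δ) * z⁻¹) (1-x))
      = (Real.log a - Real.log (1/c)) + (-C) * ((a^δ - (1/c)^δ)/δ) := by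
    rw [aux_comp_sub (fun z : ℝ => (1 + (-C)*z^δ) * z⁻¹) hca]
    exact aux_int_one_add_mul_inv h0c hca hδ
  have h2u : (∫ x in Set.Ioc (1-a) (1-1/c), auxPsi c x * max (f x) 0)
      ≤ (Real.log a - Real.log (1/c)) + C * ((a^δ - (1/c)^δ)/δ) := by
    rw [← hvalU]
    refine setIntegral_mono_on hG.integrableOn hIU measurableSet_Ioc fun x hx => ?_
    obtain ⟨h0x, hxa⟩ := hmid x hx
    obtain ⟨-, hup, -⟩ := aux_fbounds hC hδ ha1 hfb h0x hxa
    rw [auxPsi_eq hc0 hx.2]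
    show (1-x)⁻¹ * max (f x) 0 ≤ (1 + C*(1-x)^δ) * (1-x)⁻¹
    rw [mul_comm]
    exact mul_le_mul_of_nonneg_right hup (inv_nonneg.mpr h0x.le)
  have h2l : (Real.log a - Real.log (1/c)) + (-C) * ((a^δ - (1/c)^δ)/δ)
      ≤ ∫ x in Set.Ioc (1-a) (1-1/c), auxPsi c x * max (f x) 0 := by
    rw [← hvalL]
    refine setIntegral_mono_on hIL hG.integrableOn measurableSet_Ioc fun x hx => ?_
    obtain ⟨h0x, hxa⟩ := hmid x hx
    obtain ⟨hlo, -, -⟩ := aux_fbounds hC hδ ha1 hfb h0x hxa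
    rw [auxPsi_eq hc0 hx.2]
    show (1 + (-C)*(1-x)^δ) * (1-x)⁻¹ ≤ (1-x)⁻¹ * max (f x) 0
    rw [mul_comm ((1:ℝ)-x)⁻¹ _]
    have : 1 + (-C)*(1-x)^δ ≤ max (f x) 0 := le_trans (by linarith) (le_max_left _ _)
    exact mul_le_mul_of_nonneg_right this (inv_nonneg.mpr h0x.le)
  -- assemble
  have hlog_inv : Real.log (1/c) = - Real.log c := by rw [one_div, Real.log_inv]
  have hq0 : 0 ≤ (a^δ - (1/c)^δ)/δ := by
    have h := Real.rpow_le_rpow h0c.le hca hδ.le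
    exact div_nonneg (by linarith) hδ.le
  have hq1 : (a^δ - (1/c)^δ)/δ ≤ 1/δ := by
    have h1 : a^δ ≤ 1 := Real.rpow_le_one ha.le ha1 hδ.le
    have h2 : (0:ℝ) ≤ (1/c)^δ := Real.rpow_nonneg h0c.le δ
    exact (div_le_div_iff_of_pos_right hδ).mpr (by linarith)
  have hCq0 : 0 ≤ C * ((a^δ - (1/c)^δ)/δ) := mul_nonneg hC hq0
  have hCq1 : C * ((a^δ - (1/c)^δ)/δ) ≤ C/δ := by
    calc C * ((a^δ - (1/c)^δ)/δ) ≤ C * (1/δ) := mul_le_mul_of_nonneg_left hq1 hC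
      _ = C/δ := by ring
  have habs0 : 0 ≤ |Real.log a| := abs_nonneg _
  have hla : -|Real.log a| ≤ Real.log a := neg_abs_le _
  have hla0 : Real.log a ≤ 0 := Real.log_nonpos ha.le ha1
  have ha0 : (0:ℝ) ≤ a⁻¹ := inv_nonneg.mpr ha.le
  rw [hlog_inv] at h2u h2l
  rw [neg_mul] at h2l
  rw [abs_le]
  constructor
  · linarith
  · linarith

lemma aux_sq {f : ℝ → ℝ} (hf : Measurable f) {a C δ c : ℝ} (ha : 0 < a) (ha1 : a ≤ 1)
    (hC : 0 ≤ C) (hδ : 0 < δ)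
    (hfb : ∀ u : ℝ, 0 < u → u ≤ a → |f (1 - u) - 1| ≤ C * u ^ δ)
    (hprob : IsProbabilityMeasure (volume.withDensity fun x => ENNReal.ofReal (f x)))
    (hnull : (volume.withDensity fun x => ENNReal.ofReal (f x)) (Set.Icc (0:ℝ) 1)ᶜ = 0)
    (hc1 : 1 ≤ c) (hca : 1/c ≤ a) :
    (∫ x, (auxPsi c x)^2 ∂(volume.withDensity fun x => ENNReal.ofReal (f x)))
      ≤ (a⁻¹^2 + 2*(1+C)) * c := by
  have hc0 : (0:ℝ) < c := lt_of_lt_of_le one_pos hc1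
  have h0c : (0:ℝ) < 1/c := by positivity
  have hFint := aux_F_integrable hf hprob
  have hF1 := aux_F_integral_one hf hprob
  have hpsim := (auxPsi_meas c).pow_const 2
  have hG : Integrable (fun x => (auxPsi c x)^2 * max (f x) 0) volume := by
    refine hFint.bdd_mul hpsim.aestronglyMeasurable (c := c^2) (ae_of_all _ fun x => ?_)
    rw [Real.norm_eq_abs, abs_of_nonneg (pow_nonneg (auxPsi_nonneg hc0.le x) 2)]
    exact pow_le_pow_left₀ (auxPsi_nonneg hc0.le x) (auxPsi_le c x) 2
  have hGnull : ∀ᵐ x ∂(volume : Measure ℝ), x ∉ Set.Icc (0:ℝ) 1 →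
      (auxPsi c x)^2 * max (f x) 0 = 0 := by
    filter_upwards [aux_null_max hf hnull] with x hx hmem
    rw [hx hmem, mul_zero]
  rw [aux_integral_withDensity hf (fun x => (auxPsi c x)^2),
      aux_split hG hGnull ha ha1 hc1 hca]
  -- piece 1
  have h1u : (∫ x in Set.Icc (0:ℝ) (1-a), (auxPsi c x)^2 * max (f x) 0) ≤ a⁻¹^2 := by
    have step1 : (∫ x in Set.Icc (0:ℝ) (1-a), (auxPsi c x)^2 * max (f x) 0)
        ≤ ∫ x in Set.Icc (0:ℝ) (1-a), a⁻¹^2 * max (f x) 0 := by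
      refine setIntegral_mono_on hG.integrableOn (hFint.const_mul (a⁻¹^2)).integrableOn
        measurableSet_Icc fun x hx => ?_
      have hax : a ≤ 1 - x := by linarith [hx.2]
      have h1x : (0:ℝ) < 1 - x := lt_of_lt_of_le ha hax
      have hψ : auxPsi c x ≤ a⁻¹ := by
        refine le_trans (min_le_right _ _) ?_
        rw [abs_of_nonneg (inv_nonneg.mpr h1x.le)]
        exact inv_anti₀ ha hax
      exact mul_le_mul_of_nonneg_right
        (pow_le_pow_left₀ (auxPsi_nonneg hc0.le x) hψ 2) (le_max_right _ _)
    have step2 : (∫ x in Set.Icc (0:ℝ) (1-a), a⁻¹^2 * max (f x) 0)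
        = a⁻¹^2 * ∫ x in Set.Icc (0:ℝ) (1-a), max (f x) 0 :=
      MeasureTheory.integral_const_mul _ _
    have step3 : (∫ x in Set.Icc (0:ℝ) (1-a), max (f x) 0) ≤ 1 := by
      rw [← hF1]
      exact setIntegral_le_integral hFint (ae_of_all _ fun x => le_max_right _ _)
    calc (∫ x in Set.Icc (0:ℝ) (1-a), (auxPsi c x)^2 * max (f x) 0)
        ≤ a⁻¹^2 * ∫ x in Set.Icc (0:ℝ) (1-a), max (f x) 0 := by rw [← step2]; exact step1
      _ ≤ a⁻¹^2 * 1 := mul_le_mul_of_nonneg_left step3 (by positivity)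
      _ = a⁻¹^2 := mul_one _
  -- piece 3
  have h3u : (∫ x in Set.Ioc (1-1/c) 1, (auxPsi c x)^2 * max (f x) 0) ≤ (1+C) * c := by
    rw [integral_Ioc_eq_integral_Ioo]
    have hvol : volume (Set.Ioo ((1:ℝ)-1/c) 1) = ENNReal.ofReal (1/c) := by
      rw [Real.volume_Ioo, show (1:ℝ) - (1-1/c) = 1/c by ring]
    have step1 : (∫ x in Set.Ioo ((1:ℝ)-1/c) 1, (auxPsi c x)^2 * max (f x) 0)
        ≤ ∫ _ in Set.Ioo ((1:ℝ)-1/c) 1, c^2 * (1+C) := by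
      refine setIntegral_mono_on hG.integrableOn
        (integrableOn_const (by rw [hvol]; exact ENNReal.ofReal_ne_top))
        measurableSet_Ioo fun x hx => ?_
      have h0x : (0:ℝ) < 1 - x := by linarith [hx.2]
      have hxa : 1 - x ≤ a := by linarith [hx.1]
      obtain ⟨-, hup, hp1⟩ := aux_fbounds hC hδ ha1 hfb h0x hxa
      have hFle : max (f x) 0 ≤ 1 + C := by nlinarith
      exact mul_le_mul (pow_le_pow_left₀ (auxPsi_nonneg hc0.le x) (auxPsi_le c x) 2)
        hFle (le_max_right _ _) (by positivity)
    rw [setIntegral_const, measureReal_def, hvol, ENNReal.toReal_ofReal h0c.le, smul_eq_mul] at step1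
    calc (∫ x in Set.Ioo ((1:ℝ)-1/c) 1, (auxPsi c x)^2 * max (f x) 0)
        ≤ 1/c * (c^2 * (1+C)) := step1
      _ = (1+C) * c := by field_simp
  -- piece 2
  have hcontU : ContinuousOn (fun x : ℝ => (fun z : ℝ => (1+C) * (z⁻¹)^2) (1-x))
      (Set.Icc (1-a) (1-1/c)) := by
    have hc1x : ContinuousOn (fun x : ℝ => 1 - x) (Set.Icc (1-a) (1-1/c)) :=
      continuousOn_const.sub continuousOn_id
    have hne : ∀ x ∈ Set.Icc ((1:ℝ)-a) (1-1/c), (1:ℝ) - x ≠ 0 := fun x hx =>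
      (by linarith [hx.2] : (0:ℝ) < 1 - x).ne'
    exact continuousOn_const.mul ((hc1x.inv₀ hne).pow 2)
  have hIU : IntegrableOn (fun x : ℝ => (fun z : ℝ => (1+C) * (z⁻¹)^2) (1-x))
      (Set.Ioc (1-a) (1-1/c)) volume :=
    (hcontU.integrableOn_Icc).mono_set Set.Ioc_subset_Icc_self
  have hvalU : (∫ x in Set.Ioc (1-a) (1-1/c), (fun z : ℝ => (1+C) * (z⁻¹)^2) (1-x))
      = (1+C) * ((1/c)⁻¹ - a⁻¹) := by
    rw [aux_comp_sub (fun z : ℝ => (1+C) * (z⁻¹)^2) hca, intervalIntegral.integral_const_mul,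
      aux_int_inv_sq h0c hca]
  have h2u : (∫ x in Set.Ioc (1-a) (1-1/c), (auxPsi c x)^2 * max (f x) 0)
      ≤ (1+C) * ((1/c)⁻¹ - a⁻¹) := by
    rw [← hvalU]
    refine setIntegral_mono_on hG.integrableOn hIU measurableSet_Ioc fun x hx => ?_
    have h0x : (0:ℝ) < 1 - x := by linarith [hx.2]
    have hxa : 1 - x ≤ a := by linarith [hx.1]
    obtain ⟨-, hup, hp1⟩ := aux_fbounds hC hδ ha1 hfb h0x hxa
    have hFle : max (f x) 0 ≤ 1 + C := by nlinarith
    rw [auxPsi_eq hc0 hx.2]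
    show ((1-x)⁻¹)^2 * max (f x) 0 ≤ (1+C) * ((1-x)⁻¹)^2
    rw [mul_comm ((1:ℝ)+C) _]
    exact mul_le_mul_of_nonneg_left hFle (by positivity)
  have h2l : 0 ≤ ∫ x in Set.Ioc (1-a) (1-1/c), (auxPsi c x)^2 * max (f x) 0 :=
    setIntegral_nonneg measurableSet_Ioc fun x _ =>
      mul_nonneg (pow_nonneg (auxPsi_nonneg hc0.le x) 2) (le_max_right _ _)
  have h1l : 0 ≤ ∫ x in Set.Icc (0:ℝ) (1-a), (auxPsi c x)^2 * max (f x) 0 :=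
    setIntegral_nonneg measurableSet_Icc fun x _ =>
      mul_nonneg (pow_nonneg (auxPsi_nonneg hc0.le x) 2) (le_max_right _ _)
  -- assemble
  have hinvc : ((1:ℝ)/c)⁻¹ = c := by field_simp
  rw [hinvc] at h2u
  have ha0 : (0:ℝ) ≤ a⁻¹ := inv_nonneg.mpr ha.le
  nlinarith [sq_nonneg a⁻¹, mul_nonneg (sq_nonneg a⁻¹) (by linarith : (0:ℝ) ≤ c - 1),
    mul_nonneg (by linarith : (0:ℝ) ≤ 1 + C) ha0]

/-- Let `p_1, p_2, …` be i.i.d. with values in `[0,1]` and common density `f`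
satisfying `f(1−x) = 1 + O(x^δ)` as `x → 0⁺` for some `δ > 0` (the case `β = 0`).  Set
`S_n = ∑_{i=1}^n 1/(1 − p_i)`.  Then for every `ε > 0`,
`P(|S_n/(n log n) − 1| > ε) → 0` as `n → ∞`. -/
theorem sum_inv_one_sub_lln_beta_zero
    {Ω : Type*} [MeasureSpace Ω] [IsProbabilityMeasure (ℙ : Measure Ω)]
    (p : ℕ → Ω → ℝ) (hmeas : ∀ i, Measurable (p i))
    (hval : ∀ i ω, p i ω ∈ Set.Icc (0 : ℝ) 1)
    (hindep : iIndepFun p ℙ)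
    (f : ℝ → ℝ) (hf : Measurable f)
    (hdist : ∀ i, Measure.map (p i) ℙ =
      MeasureTheory.volume.withDensity (fun x => ENNReal.ofReal (f x)))
    (δ : ℝ) (hδ : 0 < δ)
    (hasymp : Asymptotics.IsBigO (nhdsWithin 0 (Set.Ioi (0 : ℝ)))
      (fun x => f (1 - x) - 1) (fun x => x ^ δ)) :
    ∀ ε : ℝ, 0 < ε →
      Filter.Tendsto
        (fun n : ℕ =>
          (ℙ {ω | ε < |(∑ i ∈ Finset.range n, 1 / (1 - p i ω)) / (n * Real.log n) - 1|}).toReal)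
        Filter.atTop (nhds 0) := by
  intro ε hε
  -- extract constants from the asymptotic hypothesis
  obtain ⟨C₀, hC₀⟩ := hasymp.bound
  rw [eventually_nhdsWithin_iff] at hC₀
  obtain ⟨r, hr0, hr⟩ := Metric.eventually_nhds_iff.mp hC₀
  set C : ℝ := max C₀ 0 with hC_def
  have hC : 0 ≤ C := le_max_right _ _
  set a : ℝ := min (r/2) 1 with ha_def
  have ha : 0 < a := lt_min (by linarith) one_pos
  have ha1 : a ≤ 1 := min_le_right _ _
  have hfb : ∀ u : ℝ, 0 < u → u ≤ a → |f (1 - u) - 1| ≤ C * u ^ δ := by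
    intro u hu hua
    have hd : dist u 0 < r := by
      rw [Real.dist_eq, sub_zero, abs_of_pos hu]
      have h1 : u ≤ r/2 := le_trans hua (by rw [ha_def]; exact min_le_left _ _)
      linarith
    have h2 := hr hd (Set.mem_Ioi.mpr hu)
    rw [Real.norm_eq_abs, Real.norm_eq_abs,
        abs_of_nonneg (Real.rpow_nonneg hu.le δ)] at h2
    exact h2.trans (mul_le_mul_of_nonneg_right (le_max_left _ _) (Real.rpow_nonneg hu.le δ))
  -- the common distribution
  set μ : Measure ℝ := volume.withDensity (fun x => ENNReal.ofReal (f x)) with hμ_def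
  have hμprob : IsProbabilityMeasure μ := by
    have h := Measure.isProbabilityMeasure_map (μ := ℙ) (f := p 0) (hmeas 0).aemeasurable
    rwa [hdist 0] at h
  have hμnull : μ (Set.Icc (0:ℝ) 1)ᶜ = 0 := by
    have h : (Measure.map (p 0) ℙ) (Set.Icc (0:ℝ) 1)ᶜ = 0 := by
      rw [Measure.map_apply (hmeas 0) measurableSet_Icc.compl]
      have hpre : p 0 ⁻¹' (Set.Icc (0:ℝ) 1)ᶜ = ∅ :=
        Set.eq_empty_iff_forall_notMem.mpr fun ω h => h (hval 0 ω)
      rw [hpre, measure_empty]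
    rwa [hdist 0] at h
  -- constants
  set K₂ : ℝ := a⁻¹ + |Real.log a| + C/δ + (1+C) with hK₂_def
  set K₃ : ℝ := a⁻¹^2 + 2*(1+C) with hK₃_def
  have hK₃0 : 0 ≤ K₃ := by rw [hK₃_def]; positivity
  set D : ℝ := (1+C) + 4*K₃/ε^2 with hD_def
  -- eventual facts
  have hlogtend : Filter.Tendsto (fun n : ℕ => Real.log n) Filter.atTop Filter.atTop :=
    Real.tendsto_log_atTop.comp tendsto_natCast_atTop_atTop
  have ev1 : ∀ᶠ n : ℕ in Filter.atTop, 2 ≤ n := Filter.eventually_ge_atTop 2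
  have ev2 : ∀ᶠ n : ℕ in Filter.atTop, 1 ≤ Real.log n := hlogtend.eventually_ge_atTop 1
  have ev3 : ∀ᶠ n : ℕ in Filter.atTop, 1/a ≤ (n:ℝ) :=
    tendsto_natCast_atTop_atTop.eventually_ge_atTop (1/a)
  have ev4 : ∀ᶠ n : ℕ in Filter.atTop,
      (K₂ + Real.log (Real.log n)) / Real.log n < ε/2 := by
    have t1 : Filter.Tendsto (fun n : ℕ => K₂ * (Real.log n)⁻¹) Filter.atTop (nhds 0) := by
      have := hlogtend.inv_tendsto_atTop.const_mul K₂
      simpa using this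
    have t2 : Filter.Tendsto (fun n : ℕ => Real.log (Real.log n) / Real.log n)
        Filter.atTop (nhds 0) :=
      (Real.isLittleO_log_id_atTop.tendsto_div_nhds_zero).comp hlogtend
    have t3 : Filter.Tendsto (fun n : ℕ => (K₂ + Real.log (Real.log n)) / Real.log n)
        Filter.atTop (nhds 0) := by
      have h := t1.add t2
      rw [add_zero] at h
      refine h.congr fun n => ?_
      rw [add_div]
      ring
    exact t3.eventually_lt_const (half_pos hε)
  -- main eventual bound
  have hbound : ∀ᶠ n : ℕ in Filter.atTop,
      (ℙ {ω | ε < |(∑ i ∈ Finset.range n, 1 / (1 - p i ω)) / (n * Real.log n) - 1|}).toReal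
        ≤ D * (Real.log n)⁻¹ := by
    filter_upwards [ev1, ev2, ev3, ev4] with n h2n hlog1 hna hev4
    have hn0 : (0:ℝ) < n := by exact_mod_cast Nat.lt_of_lt_of_le Nat.zero_lt_two h2n
    have hlogpos : (0:ℝ) < Real.log n := lt_of_lt_of_le one_pos hlog1
    set c : ℝ := (n:ℝ) * Real.log n with hc_def
    have h1n : (1:ℝ) ≤ n := by exact_mod_cast le_trans one_le_two h2n
    have hc1 : 1 ≤ c := by rw [hc_def]; nlinarith
    have hc0 : (0:ℝ) < c := lt_of_lt_of_le one_pos hc1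
    have hca : 1/c ≤ a := by
      have hac : 1/a ≤ c := le_trans hna (by rw [hc_def]; nlinarith)
      have h := one_div_le_one_div_of_le (by positivity : (0:ℝ) < 1/a) hac
      rwa [one_div_one_div] at h
    have hψmeas := auxPsi_meas c
    -- truncated variables
    set Y : ℕ → Ω → ℝ := fun i ω => auxPsi c (p i ω) with hY_def
    have hYmem : ∀ i, MemLp (Y i) 2 ℙ := fun i =>
      MemLp.of_bound (hψmeas.comp (hmeas i)).aestronglyMeasurable c
        (ae_of_all _ fun ω => by
          rw [Real.norm_eq_abs, abs_of_nonneg (auxPsi_nonneg hc0.le _)]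
          exact auxPsi_le _ _)
    have hYint : ∀ i, Integrable (Y i) ℙ := fun i => (hYmem i).integrable one_le_two
    set m : ℝ := ∫ x, auxPsi c x ∂μ with hm_def
    have hYmean : ∀ i, ∫ ω, Y i ω ∂ℙ = m := by
      intro i
      have h := integral_map (μ := ℙ) (hmeas i).aemeasurable
        (f := auxPsi c) hψmeas.aestronglyMeasurable
      rw [hdist i] at h
      exact h.symm
    have hYsq : ∀ i, ∫ ω, (Y i ω)^2 ∂ℙ = ∫ x, (auxPsi c x)^2 ∂μ := by
      intro i
      have h := integral_map (μ := ℙ) (hmeas i).aemeasurable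
        (f := fun x => (auxPsi c x)^2) (hψmeas.pow_const 2).aestronglyMeasurable
      rw [hdist i] at h
      exact h.symm
    have hVarY : ∀ i, variance (Y i) ℙ ≤ K₃ * c := by
      intro i
      refine le_trans (variance_le_expectation_sq (hYmem i).aestronglyMeasurable) ?_
      have h1 : (ℙ[(Y i)^2] : ℝ) = ∫ ω, (Y i ω)^2 ∂ℙ := by congr 1
      rw [h1, hYsq i]
      have h2 := aux_sq hf ha ha1 hC hδ hfb hμprob hμnull hc1 hca
      rw [← hK₃_def] at h2
      exact h2
    set T : Ω → ℝ := ∑ i ∈ Finset.range n, Y i with hT_def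
    have hTmem : MemLp T 2 ℙ := memLp_finset_sum' _ fun i _ => hYmem i
    have hpair : Set.Pairwise ↑(Finset.range n) fun i j => IndepFun (Y i) (Y j) ℙ :=
      fun i _ j _ hij => (hindep.indepFun hij).comp hψmeas hψmeas
    have hVarT : variance T ℙ ≤ n * (K₃ * c) := by
      rw [hT_def, IndepFun.variance_sum (fun i _ => hYmem i) hpair]
      calc ∑ i ∈ Finset.range n, variance (Y i) ℙ
          ≤ ∑ _i ∈ Finset.range n, K₃ * c := Finset.sum_le_sum fun i _ => hVarY i
        _ = n * (K₃ * c) := by rw [Finset.sum_const, Finset.card_range, nsmul_eq_mul]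
    have hET : ℙ[T] = n * m := by
      have h1 : ℙ[T] = ∫ ω, ∑ i ∈ Finset.range n, Y i ω ∂ℙ := by
        congr 1
        funext ω
        rw [hT_def, Finset.sum_apply]
      rw [h1, integral_finset_sum _ fun i _ => hYint i]
      simp_rw [hYmean]
      rw [Finset.sum_const, Finset.card_range, nsmul_eq_mul]
    set d : ℝ := ε/2 * c with hd_def
    have hd0 : 0 < d := by rw [hd_def]; positivity
    have hcheb := meas_ge_le_variance_div_sq (μ := ℙ) hTmem hd0
    -- the mean estimate
    have hmean := aux_mean hf ha ha1 hC hδ hfb hμprob hμnull hc1 hca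
    rw [← hm_def, ← hK₂_def] at hmean
    have hlogc : Real.log c = Real.log n + Real.log (Real.log n) := by
      rw [hc_def, Real.log_mul hn0.ne' (by linarith)]
    have hlln : 0 ≤ Real.log (Real.log n) := Real.log_nonneg hlog1
    have hdet : |(n:ℝ) * m - c| ≤ ε/2 * c := by
      have h1 : |m - Real.log n| ≤ K₂ + Real.log (Real.log n) := by
        have h2 : |m - Real.log n| ≤ |m - Real.log c| + |Real.log c - Real.log n| :=
          abs_sub_le m (Real.log c) (Real.log n)
        have h3 : |Real.log c - Real.log n| = Real.log (Real.log n) := by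
          rw [hlogc, show Real.log (n:ℝ) + Real.log (Real.log (n:ℝ)) - Real.log (n:ℝ)
            = Real.log (Real.log (n:ℝ)) by ring, abs_of_nonneg hlln]
        linarith
      have h4 : K₂ + Real.log (Real.log n) ≤ ε/2 * Real.log n :=
        le_of_lt ((div_lt_iff₀ hlogpos).mp hev4)
      calc |(n:ℝ) * m - c| = (n:ℝ) * |m - Real.log n| := by
            rw [hc_def, show (n:ℝ) * m - (n:ℝ) * Real.log n
              = (n:ℝ) * (m - Real.log n) by ring, abs_mul, abs_of_nonneg hn0.le]
        _ ≤ (n:ℝ) * (ε/2 * Real.log n) := mul_le_mul_of_nonneg_left (h1.trans h4) hn0.le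
        _ = ε/2 * c := by rw [hc_def]; ring
    -- events
    set B : Set Ω := ⋃ i ∈ Finset.range n, p i ⁻¹' (Set.Ioo (1 - 1/c) 1) with hB_def
    set Dev : Set Ω := {ω | d ≤ |T ω - ℙ[T]|} with hDev_def
    have hsub : {ω | ε < |(∑ i ∈ Finset.range n, 1 / (1 - p i ω)) / c - 1|} ⊆ B ∪ Dev := by
      intro ω hω
      by_contra hnot
      rw [Set.mem_union] at hnot
      push_neg at hnot
      obtain ⟨hnB, hnD⟩ := hnot
      have hSY : ∀ i ∈ Finset.range n, 1 / (1 - p i ω) = Y i ω := by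
        intro i hi
        have hnotin : p i ω ∉ Set.Ioo (1 - 1/c) 1 := by
          intro hin
          exact hnB (by rw [hB_def]; exact Set.mem_biUnion hi hin)
        have hq := hval i ω
        show 1 / (1 - p i ω) = auxPsi c (p i ω)
        rcases eq_or_lt_of_le hq.2 with heq | hlt
        · rw [heq]
          norm_num [auxPsi, min_eq_right hc0.le]
        · have hle : p i ω ≤ 1 - 1/c := by
            rcases le_or_gt (p i ω) (1 - 1/c) with h | h
            · exact h
            · exact absurd ⟨h, hlt⟩ hnotin
          rw [auxPsi_eq hc0 hle, one_div]
      have hST : (∑ i ∈ Finset.range n, 1 / (1 - p i ω)) = T ω := by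
        rw [hT_def, Finset.sum_apply]
        exact Finset.sum_congr rfl hSY
      have hTd : |T ω - ℙ[T]| < d := not_le.mp (fun h => hnD h)
      have hkey : |(∑ i ∈ Finset.range n, 1 / (1 - p i ω)) / c - 1| < ε := by
        rw [hST]
        have heq2 : T ω / c - 1 = ((T ω - ℙ[T]) + (ℙ[T] - c)) / c := by
          field_simp
          ring
        rw [heq2, abs_div, abs_of_pos hc0]
        have hdet2 : |ℙ[T] - c| ≤ ε/2 * c := by rw [hET]; exact hdet
        have hnum : |(T ω - ℙ[T]) + (ℙ[T] - c)| < d + ε/2 * c :=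
          lt_of_le_of_lt (abs_add_le _ _) (add_lt_add_of_lt_of_le hTd hdet2)
        calc |(T ω - ℙ[T]) + (ℙ[T] - c)| / c
            < (d + ε/2 * c) / c := (div_lt_div_iff_of_pos_right hc0).mpr hnum
          _ = ε := by rw [hd_def]; field_simp; try ring
      rw [Set.mem_setOf_eq] at hω
      exact absurd hω (not_lt.mpr hkey.le)
    -- measure bounds
    have hBle : ℙ B ≤ (n : ℝ≥0∞) * ENNReal.ofReal ((1+C)/c) := by
      rw [hB_def]
      refine le_trans (measure_biUnion_finset_le _ _) ?_
      have hone : ∀ i ∈ Finset.range n,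
          ℙ (p i ⁻¹' Set.Ioo (1 - 1/c) 1) ≤ ENNReal.ofReal ((1+C)/c) := by
        intro i _
        rw [← Measure.map_apply (hmeas i) measurableSet_Ioo, hdist i]
        exact aux_tail ha ha1 hC hδ hfb hc1 hca
      refine le_trans (Finset.sum_le_sum hone) ?_
      rw [Finset.sum_const, Finset.card_range, nsmul_eq_mul]
    have hDle : ℙ Dev ≤ ENNReal.ofReal (((n:ℝ) * (K₃ * c))/d^2) := by
      refine le_trans hcheb (ENNReal.ofReal_le_ofReal ?_)
      exact (div_le_div_iff_of_pos_right (pow_pos hd0 2)).mpr hVarT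
    have hAle : ℙ {ω | ε < |(∑ i ∈ Finset.range n, 1 / (1 - p i ω)) / c - 1|}
        ≤ ENNReal.ofReal ((n:ℝ) * ((1+C)/c) + ((n:ℝ) * (K₃ * c))/d^2) := by
      calc ℙ {ω | ε < |(∑ i ∈ Finset.range n, 1 / (1 - p i ω)) / c - 1|}
          ≤ ℙ (B ∪ Dev) := measure_mono hsub
        _ ≤ ℙ B + ℙ Dev := measure_union_le _ _
        _ ≤ (n : ℝ≥0∞) * ENNReal.ofReal ((1+C)/c)
              + ENNReal.ofReal (((n:ℝ) * (K₃ * c))/d^2) := add_le_add hBle hDle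
        _ = ENNReal.ofReal ((n:ℝ) * ((1+C)/c) + ((n:ℝ) * (K₃ * c))/d^2) := by
            rw [← ENNReal.ofReal_natCast n, ← ENNReal.ofReal_mul (Nat.cast_nonneg n),
              ← ENNReal.ofReal_add (by positivity) (by positivity)]
    have htoReal : (ℙ {ω | ε < |(∑ i ∈ Finset.range n, 1 / (1 - p i ω)) / c - 1|}).toReal
        ≤ (n:ℝ) * ((1+C)/c) + ((n:ℝ) * (K₃ * c))/d^2 :=
      ENNReal.toReal_le_of_le_ofReal (by positivity) hAle
    have hsimp : (n:ℝ) * ((1+C)/c) + ((n:ℝ) * (K₃ * c))/d^2 = D * (Real.log n)⁻¹ := by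
      rw [hd_def, hc_def, hD_def]
      field_simp
      try ring
    rw [hsimp] at htoReal
    exact htoReal
  -- conclude by squeezing
  have hD0 : Filter.Tendsto (fun n : ℕ => D * (Real.log n)⁻¹) Filter.atTop (nhds 0) := by
    have := hlogtend.inv_tendsto_atTop.const_mul D
    simpa using this
  exact squeeze_zero' (Filter.Eventually.of_forall fun n => ENNReal.toReal_nonneg) hbound hD0
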